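/- Let H⁰ and H¹ be vectors in ℝⁿ with max_i |H⁰_i − H¹_i| ≤ δ/n, where 0 ≤ δ < 2·ε_res·n and ε_res > 0. Let B be uniformly distributed on {0,1}, and conditionally on B = b let the observation Y be uniformly distributed on the hypercube H(H^B, ε_res) in ℝⁿ. Then every measurable test ψ : ℝⁿ → {0,1} has probability of error P(ψ(Y) ≠ B) ≥ (1/2)·(1 − δ/(2·ε_res·n))ⁿ. -/

import Mathlib

open MeasureTheory
open scoped ENNReal

/-- The axis-aligned hypercube of radius `r` centered at `H`, inside `ℝⁿ`. -/
def hypercube {n : ℕ} (H : Fin n → ℝ) (r : ℝ) : Set (Fin n → ℝ) :=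
  {x | ∀ i, |x i - H i| ≤ r}

/-- The uniform probability measure on a set `s`: normalized Lebesgue measure restricted
to `s`. -/
noncomputable def uniformOn {α : Type*} [MeasureSpace α] (s : Set α) : Measure α :=
  (volume s)⁻¹ • volume.restrict s

/-- Let `H⁰, H¹ ∈ ℝⁿ` with `max_i |H⁰_i − H¹_i| ≤ δ/n`, `0 ≤ δ < 2 ε_res n`,
`ε_res > 0`.  Let `B` be uniform on `{0,1}` and, conditionally on `B = b`, let `Y` be uniform
on the hypercube `H(H^b, ε_res)`; i.e. the joint law of `(B, Y)` is
`(1/2)·(δ_false ⊗ Unif(H(H⁰,ε_res))) + (1/2)·(δ_true ⊗ Unif(H(H¹,ε_res)))`.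
Then every measurable test `ψ : ℝⁿ → Bool` has error probability at least
`(1/2)(1 − δ/(2 ε_res n))ⁿ`. -/
theorem cube_pi {n : ℕ} (H : Fin n → ℝ) (r : ℝ) :
    hypercube H r = Set.pi Set.univ fun i => Set.Icc (H i - r) (H i + r) := by
  ext x
  simp only [hypercube, Set.mem_setOf_eq, Set.mem_univ_pi, Set.mem_Icc, abs_le]
  constructor
  · intro h i; constructor <;> linarith [(h i).1, (h i).2]
  · intro h i; constructor <;> linarith [(h i).1, (h i).2]

theorem cube_vol {n : ℕ} (H : Fin n → ℝ) (r : ℝ) :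
    volume (hypercube H r) = (ENNReal.ofReal (2*r))^n := by
  rw [cube_pi, volume_pi_pi]
  have : ∀ i : Fin n, volume (Set.Icc (H i - r) (H i + r)) = ENNReal.ofReal (2*r) := by
    intro i; rw [Real.volume_Icc]; ring_nf
  simp [this]

theorem cube_meas {n : ℕ} (H : Fin n → ℝ) (r : ℝ) : MeasurableSet (hypercube H r) := by
  rw [cube_pi]; exact MeasurableSet.univ_pi fun i => measurableSet_Icc

theorem inter_vol {n : ℕ} (H₀ H₁ : Fin n → ℝ) (δ εres : ℝ) (hδ : 0 ≤ δ) (hε : 0 < εres)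
    (hδε : δ < 2 * εres * n) (hclose : ∀ i, |H₀ i - H₁ i| ≤ δ / n) (hn : 0 < n) :
    (ENNReal.ofReal (2*εres - δ/n))^n ≤ volume (hypercube H₀ εres ∩ hypercube H₁ εres) := by
  have : hypercube H₀ εres ∩ hypercube H₁ εres =
      Set.pi Set.univ fun i => Set.Icc (max (H₀ i - εres) (H₁ i - εres))
        (min (H₀ i + εres) (H₁ i + εres)) := by
    rw [cube_pi, cube_pi, ← Set.pi_inter_distrib]
    simp [Set.Icc_inter_Icc]
  rw [this, volume_pi_pi]
  calc ENNReal.ofReal (2*εres - δ/n) ^ n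
      = ∏ _i : Fin n, ENNReal.ofReal (2*εres - δ/n) := by simp
    _ ≤ _ := ?_
  apply Finset.prod_le_prod'
  intro i _
  rw [Real.volume_Icc]
  apply ENNReal.ofReal_le_ofReal
  have h1 := abs_le.mp (hclose i)
  have hδn : 0 ≤ δ / n := div_nonneg hδ (by positivity)
  rcases le_total (H₀ i) (H₁ i) with h | h
  · rw [max_eq_right (by linarith), min_eq_left (by linarith)]; linarith [h1.1]
  · rw [max_eq_left (by linarith), min_eq_right (by linarith)]; linarith [h1.2]


theorem stmt6 {n : ℕ} (H₀ H₁ : Fin n → ℝ) (δ εres : ℝ) (hδ : 0 ≤ δ) (hε : 0 < εres)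
    (hδε : δ < 2 * εres * n) (hclose : ∀ i, |H₀ i - H₁ i| ≤ δ / n)
    (μ : Measure (Bool × (Fin n → ℝ)))
    (hμ : μ = ((1 : ℝ≥0∞) / 2) • ((Measure.dirac false).prod (uniformOn (hypercube H₀ εres)))
            + ((1 : ℝ≥0∞) / 2) • ((Measure.dirac true).prod (uniformOn (hypercube H₁ εres))))
    (ψ : (Fin n → ℝ) → Bool) (hψ : Measurable ψ) :
    (1 / 2 : ℝ) * (1 - δ / (2 * εres * n)) ^ n ≤ (μ {p | ψ p.2 ≠ p.1}).toReal := by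
  have hn : 0 < n := by
    rcases Nat.eq_zero_or_pos n with h | h
    · subst h; simp at hδε; linarith
    · exact h
  have hn' : (0:ℝ) < n := by exact_mod_cast hn
  set V : ℝ≥0∞ := ENNReal.ofReal (2*εres) with hVdef
  have hV0 : V ≠ 0 := by
    simp [hVdef, ENNReal.ofReal_eq_zero]; linarith
  have hVt : V^n ≠ ⊤ := by
    exact ENNReal.pow_ne_top ENNReal.ofReal_ne_top
  have hVn0 : V^n ≠ 0 := pow_ne_zero _ hV0
  set A : Set (Fin n → ℝ) := ψ ⁻¹' {true} with hAdef
  have hA : MeasurableSet A := hψ (measurableSet_singleton true)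
  set E : Set (Bool × (Fin n → ℝ)) := {p | ψ p.2 ≠ p.1} with hEdef
  have hE : MeasurableSet E := by
    have : E = (fun p : Bool × (Fin n → ℝ) => (ψ p.2, p.1)) ⁻¹' {q : Bool × Bool | q.1 ≠ q.2} := by
      ext p; simp [hEdef]
    rw [this]
    exact ((hψ.comp measurable_snd).prodMk measurable_fst)
      ((Set.finite_univ.subset (Set.subset_univ _)).measurableSet)
  have hpre0 : Prod.mk false ⁻¹' E = A := by
    ext y; simp [hEdef, hAdef]
  have hpre1 : Prod.mk true ⁻¹' E = Aᶜ := by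
    ext y; simp [hEdef, hAdef]
  set S₀ := hypercube H₀ εres
  set S₁ := hypercube H₁ εres
  have hvol0 : volume S₀ = V^n := cube_vol H₀ εres
  have hvol1 : volume S₁ = V^n := cube_vol H₁ εres
  haveI : SFinite (uniformOn S₀) :=
    inferInstanceAs (SFinite ((volume S₀)⁻¹ • volume.restrict S₀))
  haveI : SFinite (uniformOn S₁) :=
    inferInstanceAs (SFinite ((volume S₁)⁻¹ • volume.restrict S₁))
  have hμE : μ E = 2⁻¹ * ((V^n)⁻¹ * volume (A ∩ S₀)) + 2⁻¹ * ((V^n)⁻¹ * volume (Aᶜ ∩ S₁)) := by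
    rw [hμ]
    simp only [Measure.add_apply, Measure.smul_apply, smul_eq_mul, one_div]
    rw [Measure.dirac_prod, Measure.dirac_prod,
      Measure.map_apply measurable_prodMk_left hE,
      Measure.map_apply measurable_prodMk_left hE, hpre0, hpre1]
    rw [uniformOn, uniformOn, Measure.smul_apply, Measure.smul_apply,
      Measure.restrict_apply hA, Measure.restrict_apply hA.compl, hvol0, hvol1]
    rfl
  -- lower bound
  set W : ℝ≥0∞ := ENNReal.ofReal (2*εres - δ/n) with hWdef
  have hSle : W^n ≤ volume (S₀ ∩ S₁) := inter_vol H₀ H₁ δ εres hδ hε hδε hclose hn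
  have hsplit : volume (A ∩ (S₀ ∩ S₁)) + volume (Aᶜ ∩ (S₀ ∩ S₁)) = volume (S₀ ∩ S₁) := by
    rw [Set.inter_comm A, Set.inter_comm Aᶜ, ← Set.diff_eq]
    exact measure_inter_add_diff _ hA
  have hkey : 2⁻¹ * ((V^n)⁻¹ * W^n) ≤ μ E := by
    rw [hμE]
    calc 2⁻¹ * ((V^n)⁻¹ * W^n)
        ≤ 2⁻¹ * ((V^n)⁻¹ * volume (S₀ ∩ S₁)) := by gcongr
      _ = 2⁻¹ * ((V^n)⁻¹ * volume (A ∩ (S₀ ∩ S₁))) + 2⁻¹ * ((V^n)⁻¹ * volume (Aᶜ ∩ (S₀ ∩ S₁))) := by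
          rw [← hsplit]; ring
      _ ≤ _ := by
          gcongr <;> [exact Set.inter_subset_left; exact Set.inter_subset_right]
  have hμEt : μ E ≠ ⊤ := by
    rw [hμE]
    have h0 : (V^n)⁻¹ * volume (A ∩ S₀) ≠ ⊤ := by
      apply ENNReal.mul_ne_top (ENNReal.inv_ne_top.mpr hVn0)
      exact ne_top_of_le_ne_top (hvol0 ▸ hVt) (measure_mono Set.inter_subset_right)
    have h1 : (V^n)⁻¹ * volume (Aᶜ ∩ S₁) ≠ ⊤ := by
      apply ENNReal.mul_ne_top (ENNReal.inv_ne_top.mpr hVn0)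
      exact ne_top_of_le_ne_top (hvol1 ▸ hVt) (measure_mono Set.inter_subset_right)
    exact ENNReal.add_ne_top.mpr ⟨ENNReal.mul_ne_top (by simp) h0, ENNReal.mul_ne_top (by simp) h1⟩
  have := ENNReal.toReal_mono hμEt hkey
  refine le_trans (le_of_eq ?_) this
  have h2ε : (0:ℝ) < 2*εres := by linarith
  have hW0 : (0:ℝ) ≤ 2*εres - δ/n := by
    rw [sub_nonneg, div_le_iff₀ hn']
    linarith [hδε]
  simp only [ENNReal.toReal_mul, ENNReal.toReal_inv, ENNReal.toReal_pow, hVdef, hWdef,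
    ENNReal.toReal_ofReal h2ε.le, ENNReal.toReal_ofReal hW0, ENNReal.toReal_ofNat]
  have heq : 1 - δ / (2*εres*n) = (2*εres - δ/n)/(2*εres) := by
    field_simp
  rw [heq, div_pow]
  field_simp
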